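/- Let θ ∈ [0, π/2]^N and let V denote the set of vectors all of whose coordinates lie in {0, π/2} and which take both values 0 and π/2 (i.e. all vertices of the cube except the two constant vertices). Then the kernel of J(θ) has dimension 1 if θ ∉ V, and dimension 2 if θ ∈ V. In particular, for θ in the open cube (0,π/2)^N the kernel of J(θ) is exactly the span of the all-ones vector (1,1,...,1). -/
import Mathlib

open Real Matrix Finset

/-- The Jacobian `J(θ)` of the Kuramoto vector field: `J_ij = cos (θ_i - θ_j)` off the
diagonal and `J_ii = -Σ_{k ≠ i} cos (θ_k - θ_i)`. -/
noncomputable def Jmat (N : ℕ) (θ : Fin N → ℝ) : Matrix (Fin N) (Fin N) ℝ :=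
  Matrix.of fun i j =>
    if i = j then -∑ k ∈ Finset.univ \ {i}, Real.cos (θ k - θ i)
    else Real.cos (θ i - θ j)

/-- The vertex set `V`: vectors with all coordinates in `{0, π/2}` taking both values. -/
def vertexSet (N : ℕ) : Set (Fin N → ℝ) :=
  {θ | (∀ i, θ i = 0 ∨ θ i = Real.pi / 2) ∧ (∃ i, θ i = 0) ∧ ∃ j, θ j = Real.pi / 2}

lemma Jmat_mulVec (N : ℕ) (θ v : Fin N → ℝ) (i : Fin N) :
    (Jmat N θ).mulVec v i = ∑ j, Real.cos (θ i - θ j) * (v j - v i) := by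
  have hw : ∀ k, Real.cos (θ k - θ i) = Real.cos (θ i - θ k) := fun k => by
    rw [← Real.cos_neg, neg_sub]
  have hsplit : ∀ f : Fin N → ℝ, ∑ j, f j = f i + ∑ j ∈ Finset.univ \ {i}, f j := by
    intro f
    rw [Finset.sdiff_singleton_eq_erase, ← Finset.add_sum_erase _ f (Finset.mem_univ i)]
  rw [Matrix.mulVec, dotProduct]
  rw [hsplit (fun j => Jmat N θ i j * v j), hsplit (fun j => Real.cos (θ i - θ j) * (v j - v i))]
  have h1 : Jmat N θ i i = -∑ k ∈ Finset.univ \ {i}, Real.cos (θ i - θ k) := by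
    simp only [Jmat, Matrix.of_apply, if_pos rfl]
    rw [Finset.sum_congr rfl fun k _ => hw k]
    simp
  have h2 : ∀ j ∈ Finset.univ \ {i}, Jmat N θ i j * v j = Real.cos (θ i - θ j) * v j := by
    intro j hj
    simp only [Finset.mem_sdiff, Finset.mem_singleton] at hj
    simp [Jmat, (Ne.symm hj.2 : i ≠ j)]
  rw [Finset.sum_congr rfl h2, h1]
  simp only [sub_self, Real.cos_zero, mul_sub]
  rw [Finset.sum_sub_distrib, ← Finset.sum_mul]
  ring

lemma quad_identity (N : ℕ) (θ v : Fin N → ℝ) :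
    ∑ i, ∑ j, Real.cos (θ i - θ j) * (v i - v j)^2
      = -2 * ∑ i, v i * (Jmat N θ).mulVec v i := by
  have h1 : ∑ i, ∑ j, Real.cos (θ i - θ j) * (v j)^2
      = ∑ i, ∑ j, Real.cos (θ i - θ j) * (v i)^2 := by
    rw [Finset.sum_comm]
    refine Finset.sum_congr rfl fun i _ => Finset.sum_congr rfl fun j _ => ?_
    rw [← Real.cos_neg, neg_sub]
  have h2 : ∀ i, v i * (Jmat N θ).mulVec v i
      = ∑ j, v i * (Real.cos (θ i - θ j) * (v j - v i)) := by
    intro i; rw [Jmat_mulVec, Finset.mul_sum]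
  calc ∑ i, ∑ j, Real.cos (θ i - θ j) * (v i - v j)^2
      = ∑ i, ∑ j, (Real.cos (θ i - θ j) * (v j)^2 - Real.cos (θ i - θ j) * (v i)^2
          - 2 * (v i * (Real.cos (θ i - θ j) * (v j - v i)))) := by
        refine Finset.sum_congr rfl fun i _ => Finset.sum_congr rfl fun j _ => ?_
        ring
    _ = -2 * ∑ i, v i * (Jmat N θ).mulVec v i := by
        simp only [Finset.sum_sub_distrib]
        rw [h1, sub_self, zero_sub]
        simp only [← Finset.mul_sum, ← h2]
        ring

lemma ker_iff (N : ℕ) (θ : Fin N → ℝ)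
    (hθ : ∀ i, θ i ∈ Set.Icc (0 : ℝ) (Real.pi / 2)) (v : Fin N → ℝ) :
    v ∈ LinearMap.ker (Matrix.toLin' (Jmat N θ)) ↔
      ∀ i j, Real.cos (θ i - θ j) ≠ 0 → v i = v j := by
  have hmem : v ∈ LinearMap.ker (Matrix.toLin' (Jmat N θ)) ↔ (Jmat N θ).mulVec v = 0 := by
    rw [LinearMap.mem_ker, Matrix.toLin'_apply]
  rw [hmem]
  have hcosnn : ∀ i j, 0 ≤ Real.cos (θ i - θ j) := by
    intro i j
    apply Real.cos_nonneg_of_mem_Icc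
    constructor
    · have := (hθ i).1; have := (hθ j).2; linarith
    · have := (hθ i).2; have := (hθ j).1; linarith
  constructor
  · intro hv i j hcos
    have hS : ∑ i, v i * (Jmat N θ).mulVec v i = 0 := by
      refine Finset.sum_eq_zero fun i _ => ?_
      rw [hv]; simp
    have hT : ∑ i, ∑ j, Real.cos (θ i - θ j) * (v i - v j)^2 = 0 := by
      rw [quad_identity, hS]; ring
    have hnn : ∀ i ∈ Finset.univ, (0:ℝ) ≤ ∑ j, Real.cos (θ i - θ j) * (v i - v j)^2 := by
      intro i _
      refine Finset.sum_nonneg fun j _ => mul_nonneg (hcosnn i j) (sq_nonneg _)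
    have hinner := (Finset.sum_eq_zero_iff_of_nonneg hnn).mp hT i (Finset.mem_univ i)
    have hterm := (Finset.sum_eq_zero_iff_of_nonneg
      (fun j _ => mul_nonneg (hcosnn i j) (sq_nonneg _))).mp hinner j (Finset.mem_univ j)
    rcases mul_eq_zero.mp hterm with h | h
    · exact absurd h hcos
    · have := pow_eq_zero_iff (n := 2) (by norm_num) |>.mp h
      linarith [sub_eq_zero.mp this]
  · intro hv
    funext i
    show (Jmat N θ).mulVec v i = 0
    rw [Jmat_mulVec]
    refine Finset.sum_eq_zero fun j _ => ?_
    by_cases hc : Real.cos (θ i - θ j) = 0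
    · rw [hc, zero_mul]
    · rw [hv i j hc, sub_self, mul_zero]

lemma ker_eq_span_one (N : ℕ) (hN : 0 < N) (θ : Fin N → ℝ)
    (hθ : ∀ i, θ i ∈ Set.Icc (0 : ℝ) (Real.pi / 2)) (hV : θ ∉ vertexSet N) :
    LinearMap.ker (Matrix.toLin' (Jmat N θ))
      = Submodule.span ℝ {fun _ : Fin N => (1 : ℝ)} := by
  have i0 : Fin N := ⟨0, hN⟩
  have hconn : ∀ v : Fin N → ℝ, (∀ i j, Real.cos (θ i - θ j) ≠ 0 → v i = v j) →
      ∀ i j, v i = v j := by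
    intro v hv i j
    by_cases hmid : ∃ m, θ m ≠ 0 ∧ θ m ≠ Real.pi / 2
    · obtain ⟨m, hm0, hm1⟩ := hmid
      have hmlt : θ m ∈ Set.Ioo (0:ℝ) (Real.pi/2) := by
        rcases hθ m with ⟨h1, h2⟩
        exact ⟨lt_of_le_of_ne h1 (Ne.symm hm0), lt_of_le_of_ne h2 hm1⟩
      have hc : ∀ k, Real.cos (θ k - θ m) ≠ 0 := by
        intro k
        apply ne_of_gt
        apply Real.cos_pos_of_mem_Ioo
        constructor
        · have := (hθ k).1; have := hmlt.2; linarith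
        · have := (hθ k).2; have := hmlt.1; linarith
      rw [hv i m (hc i), hv j m (hc j)]
    · push_neg at hmid
      have hall : ∀ m, θ m = 0 ∨ θ m = Real.pi / 2 := by
        intro m
        by_cases h : θ m = 0
        · exact Or.inl h
        · exact Or.inr (hmid m h)
      have heq : θ i = θ j := by
        by_contra hne
        apply hV
        refine ⟨hall, ?_, ?_⟩
        · rcases hall i with h | h
          · exact ⟨i, h⟩
          · rcases hall j with h' | h'
            · exact ⟨j, h'⟩
            · exact absurd (h.trans h'.symm) hne
        · rcases hall i with h | h
          · rcases hall j with h' | h'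
            · exact absurd (h.trans h'.symm) hne
            · exact ⟨j, h'⟩
          · exact ⟨i, h⟩
      exact hv i j (by rw [heq, sub_self, Real.cos_zero]; norm_num)
  apply le_antisymm
  · intro v hv
    rw [ker_iff N θ hθ] at hv
    have : v = v i0 • (fun _ : Fin N => (1:ℝ)) := by
      funext k
      simp [hconn v hv k i0]
    rw [this]
    exact Submodule.smul_mem _ _ (Submodule.subset_span rfl)
  · rw [Submodule.span_le, Set.singleton_subset_iff]
    rw [SetLike.mem_coe, ker_iff N θ hθ]
    intro i j _
    rfl

theorem stmt9 (N : ℕ) (hN : 2 ≤ N) (θ : Fin N → ℝ)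
    (hθ : ∀ i, θ i ∈ Set.Icc (0 : ℝ) (Real.pi / 2)) :
    (θ ∉ vertexSet N →
      Module.finrank ℝ (LinearMap.ker (Matrix.toLin' (Jmat N θ))) = 1) ∧
    (θ ∈ vertexSet N →
      Module.finrank ℝ (LinearMap.ker (Matrix.toLin' (Jmat N θ))) = 2) ∧
    ((∀ i, θ i ∈ Set.Ioo (0 : ℝ) (Real.pi / 2)) →
      LinearMap.ker (Matrix.toLin' (Jmat N θ))
        = Submodule.span ℝ {fun _ : Fin N => (1 : ℝ)}) := by
  have hN0 : 0 < N := by omega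
  have hpi2 : Real.pi / 2 ≠ 0 := by positivity
  refine ⟨?_, ?_, ?_⟩
  · intro hV
    rw [ker_eq_span_one N hN0 θ hθ hV]
    apply finrank_span_singleton
    intro h
    have := congr_fun h ⟨0, hN0⟩
    simp at this
  · rintro ⟨hall, ⟨i0, hi0⟩, ⟨j0, hj0⟩⟩
    set χ₀ : Fin N → ℝ := fun i => if θ i = 0 then 1 else 0 with hχ₀
    set χ₁ : Fin N → ℝ := fun i => if θ i = 0 then 0 else 1 with hχ₁
    have hcos_ne : ∀ i j, Real.cos (θ i - θ j) ≠ 0 → θ i = θ j := by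
      intro i j hc
      by_contra hne
      apply hc
      rcases hall i with h | h <;> rcases hall j with h' | h'
      · exact absurd (h.trans h'.symm) hne
      · rw [h, h', zero_sub, Real.cos_neg, Real.cos_pi_div_two]
      · rw [h, h', sub_zero, Real.cos_pi_div_two]
      · exact absurd (h.trans h'.symm) hne
    have hker : LinearMap.ker (Matrix.toLin' (Jmat N θ))
        = Submodule.span ℝ (Set.range ![χ₀, χ₁]) := by
      apply le_antisymm
      · intro v hv
        rw [ker_iff N θ hθ] at hv
        have hveq : ∀ i j, θ i = θ j → v i = v j := by
          intro i j h
          exact hv i j (by rw [h, sub_self, Real.cos_zero]; norm_num)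
        have : v = v i0 • χ₀ + v j0 • χ₁ := by
          funext k
          by_cases h : θ k = 0
          · have := hveq k i0 (h.trans hi0.symm)
            simp [hχ₀, hχ₁, h, this]
          · have hk : θ k = Real.pi / 2 := (hall k).resolve_left h
            have := hveq k j0 (hk.trans hj0.symm)
            simp [hχ₀, hχ₁, h, this]
        rw [this]
        apply Submodule.add_mem
        · exact Submodule.smul_mem _ _ (Submodule.subset_span ⟨0, rfl⟩)
        · exact Submodule.smul_mem _ _ (Submodule.subset_span ⟨1, rfl⟩)
      · rw [Submodule.span_le]
        rintro x ⟨k, rfl⟩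
        rw [SetLike.mem_coe, ker_iff N θ hθ]
        intro i j hc
        have h := hcos_ne i j hc
        fin_cases k <;> simp [hχ₀, hχ₁, h]
    rw [hker]
    have hli : LinearIndependent ℝ ![χ₀, χ₁] := by
      rw [Fintype.linearIndependent_iff]
      intro g hg
      have h0 := congr_fun hg i0
      have h1 := congr_fun hg j0
      have hj0ne : θ j0 ≠ 0 := by rw [hj0]; exact hpi2
      simp [Fin.sum_univ_two, hχ₀, hχ₁, hi0, hj0ne] at h0 h1
      intro k
      fin_cases k
      · exact h0
      · exact h1
    rw [finrank_span_eq_card hli]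
    simp
  · intro hopen
    apply ker_eq_span_one N hN0 θ hθ
    rintro ⟨hall, -, -⟩
    rcases hall ⟨0, hN0⟩ with h | h
    · exact absurd h (ne_of_gt (hopen ⟨0, hN0⟩).1)
    · exact absurd h (ne_of_lt (hopen ⟨0, hN0⟩).2)
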